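/- Let A be an n×n symmetric positive semidefinite matrix with partial Cholesky factorization Πᵀ A Π = L Lᵀ + [[0,0],[0,S]] with L ∈ ℝ^{n×k}. Then for every 1 ≤ j ≤ k, λ_j(A) ≥ σ_j²(L), i.e., the squared singular values of L are dominated by the corresponding eigenvalues of A. -/

import Mathlib

open Matrix

/-- The `j`-th largest eigenvalue (0-based index `j`) of a Hermitian matrix. -/
noncomputable def eigDesc {n : ℕ} {A : Matrix (Fin n) (Fin n) ℝ} (hA : A.IsHermitian)
    (j : Fin n) : ℝ :=
  (hA.eigenvalues ∘ Tuple.sort hA.eigenvalues) j.rev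

/-- The spectral norm (largest singular value) of a real matrix. -/
noncomputable def specNorm {m n : ℕ} (X : Matrix (Fin m) (Fin n) ℝ) : ℝ :=
  Real.sqrt (⨆ j, (show (Xᵀ * X).IsHermitian by
    simpa using Matrix.isHermitian_conjTranspose_mul_self X).eigenvalues j)

/-- The `j`-th largest singular value (0-based index `j`) of a real matrix. -/
noncomputable def sval {m k : ℕ} (X : Matrix (Fin m) (Fin k) ℝ) (j : Fin k) : ℝ :=
  Real.sqrt (eigDesc (show (Xᵀ * X).IsHermitian by
    simpa using Matrix.isHermitian_conjTranspose_mul_self X) j)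


namespace CholAux

open Finset Submodule
open scoped RealInnerProductSpace

lemma inner_eq_dot {n : ℕ} (x y : EuclideanSpace ℝ (Fin n)) :
    ⟪x, y⟫ = (x : Fin n → ℝ) ⬝ᵥ (y : Fin n → ℝ) := by
  simp [PiLp.inner_apply, dotProduct, RCLike.inner_apply, mul_comm]

lemma dot_conj {n k : ℕ} (Q : Matrix (Fin n) (Fin k) ℝ) (A : Matrix (Fin n) (Fin n) ℝ)
    (x : Fin k → ℝ) :
    x ⬝ᵥ ((Qᵀ * A * Q) *ᵥ x) = (Q *ᵥ x) ⬝ᵥ (A *ᵥ (Q *ᵥ x)) := by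
  rw [Matrix.mul_assoc, ← Matrix.mulVec_mulVec, Matrix.dotProduct_mulVec,
    Matrix.vecMul_transpose, Matrix.mulVec_mulVec]

lemma onb_inner_sum {ι E : Type*} [Fintype ι] [NormedAddCommGroup E] [InnerProductSpace ℝ E]
    (b : OrthonormalBasis ι ℝ E) (x y : E) :
    ⟪x, y⟫ = ∑ i, b.repr x i * b.repr y i := by
  rw [← b.repr.inner_map_map x y]
  simp only [PiLp.inner_apply, RCLike.inner_apply, starRingEnd_apply, star_trivial]
  exact Finset.sum_congr rfl fun _ _ => mul_comm _ _

lemma repr_eq_zero_of_mem_span {ι E : Type*} [Fintype ι] [DecidableEq ι] [NormedAddCommGroup E]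
    [InnerProductSpace ℝ E] (b : OrthonormalBasis ι ℝ E) (t : Finset ι) {x : E}
    (hx : x ∈ Submodule.span ℝ (b '' ↑t)) {i : ι} (hi : i ∉ t) : b.repr x i = 0 := by
  induction hx using Submodule.span_induction with
  | mem y hy =>
    obtain ⟨j, hj, rfl⟩ := hy
    rw [b.repr_apply_apply]
    have hne : i ≠ j := fun h => hi (h ▸ hj)
    simpa [hne] using b.orthonormal.2 hne
  | zero => simp
  | add u v _ _ hu hv => simp [hu, hv]
  | smul a u _ hu => simp [hu]

lemma finrank_span_onb {ι E : Type*} [Fintype ι] [NormedAddCommGroup E]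
    [InnerProductSpace ℝ E] (b : OrthonormalBasis ι ℝ E) (t : Finset ι) :
    Module.finrank ℝ (Submodule.span ℝ (b '' ↑t)) = t.card := by
  have hli : LinearIndependent ℝ (fun i : (↑t : Set ι) => b i) :=
    b.orthonormal.linearIndependent.comp _ Subtype.val_injective
  have h := finrank_span_eq_card hli
  rw [← Set.image_eq_range] at h
  simpa using h

lemma card_filter_ge {n : ℕ} (f : Fin n → ℝ) (j : Fin n) :
    j.val + 1 ≤ (Finset.univ.filter fun i => (f ∘ Tuple.sort f) j.rev ≤ f i).card := by
  classical
  have h : (Finset.Ici j.rev).card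
      ≤ (Finset.univ.filter fun i => (f ∘ Tuple.sort f) j.rev ≤ f i).card := by
    apply Finset.card_le_card_of_injOn (Tuple.sort f)
    · intro a ha
      have ha : j.rev ≤ a := by simpa using ha
      simp only [Finset.coe_filter, Set.mem_setOf_eq, Finset.mem_coe, Finset.mem_filter, Finset.mem_univ, true_and]
      exact Tuple.monotone_sort f ha
    · exact (Tuple.sort f).injective.injOn
  rw [Fin.card_Ici] at h
  have hj : j.rev.val = n - (j.val + 1) := Fin.val_rev j
  omega

lemma card_filter_le {n : ℕ} (f : Fin n → ℝ) (j : Fin n) :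
    n - j.val ≤ (Finset.univ.filter fun i => f i ≤ (f ∘ Tuple.sort f) j.rev).card := by
  classical
  have h : (Finset.Iic j.rev).card
      ≤ (Finset.univ.filter fun i => f i ≤ (f ∘ Tuple.sort f) j.rev).card := by
    apply Finset.card_le_card_of_injOn (Tuple.sort f)
    · intro a ha
      have ha : a ≤ j.rev := by simpa using ha
      simp only [Finset.coe_filter, Set.mem_setOf_eq, Finset.mem_coe, Finset.mem_filter, Finset.mem_univ, true_and]
      exact Tuple.monotone_sort f ha
    · exact (Tuple.sort f).injective.injOn
  rw [Fin.card_Iic] at h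
  have hj : j.rev.val = n - (j.val + 1) := Fin.val_rev j
  have : j.val < n := j.isLt
  omega

lemma repr_toEuclideanLin {n : ℕ} {B : Matrix (Fin n) (Fin n) ℝ} (hB : B.IsHermitian)
    (x : EuclideanSpace ℝ (Fin n)) (i : Fin n) :
    hB.eigenvectorBasis.repr (Matrix.toEuclideanLin B x) i
      = hB.eigenvalues i * hB.eigenvectorBasis.repr x i := by
  rw [OrthonormalBasis.repr_apply_apply, OrthonormalBasis.repr_apply_apply]
  have hsym : (Matrix.toEuclideanLin B).IsSymmetric := Matrix.isHermitian_iff_isSymmetric.1 hB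
  rw [← hsym (hB.eigenvectorBasis i) x]
  have hb : Matrix.toEuclideanLin B (hB.eigenvectorBasis i)
      = hB.eigenvalues i • hB.eigenvectorBasis i := by
    apply WithLp.ofLp_injective
    exact hB.mulVec_eigenvectorBasis i
  rw [hb, real_inner_smul_left]

lemma dot_mulVec_eq_sum {n : ℕ} {B : Matrix (Fin n) (Fin n) ℝ} (hB : B.IsHermitian)
    (x : EuclideanSpace ℝ (Fin n)) :
    (x : Fin n → ℝ) ⬝ᵥ (B *ᵥ (x : Fin n → ℝ))
      = ∑ i, hB.eigenvalues i * (hB.eigenvectorBasis.repr x i) ^ 2 := by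
  have h1 : (x : Fin n → ℝ) ⬝ᵥ (B *ᵥ (x : Fin n → ℝ)) = ⟪x, Matrix.toEuclideanLin B x⟫ :=
    (inner_eq_dot x (Matrix.toEuclideanLin B x)).symm
  rw [h1, onb_inner_sum hB.eigenvectorBasis]
  refine Finset.sum_congr rfl fun i _ => ?_
  rw [repr_toEuclideanLin hB x i]; ring

lemma mulVec_dot_mulVec_eq_sum {n : ℕ} {B : Matrix (Fin n) (Fin n) ℝ} (hB : B.IsHermitian)
    (x : EuclideanSpace ℝ (Fin n)) :
    (B *ᵥ (x : Fin n → ℝ)) ⬝ᵥ (B *ᵥ (x : Fin n → ℝ))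
      = ∑ i, (hB.eigenvalues i) ^ 2 * (hB.eigenvectorBasis.repr x i) ^ 2 := by
  have h1 : (B *ᵥ (x : Fin n → ℝ)) ⬝ᵥ (B *ᵥ (x : Fin n → ℝ))
      = ⟪Matrix.toEuclideanLin B x, Matrix.toEuclideanLin B x⟫ :=
    (inner_eq_dot (Matrix.toEuclideanLin B x) (Matrix.toEuclideanLin B x)).symm
  rw [h1, onb_inner_sum hB.eigenvectorBasis]
  refine Finset.sum_congr rfl fun i _ => ?_
  rw [repr_toEuclideanLin hB x i]; ring

lemma norm_sq_eq_sum {n : ℕ} {B : Matrix (Fin n) (Fin n) ℝ} (hB : B.IsHermitian)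
    (x : EuclideanSpace ℝ (Fin n)) :
    ‖x‖ ^ 2 = ∑ i, (hB.eigenvectorBasis.repr x i) ^ 2 := by
  rw [← real_inner_self_eq_norm_sq, onb_inner_sum hB.eigenvectorBasis]
  refine Finset.sum_congr rfl fun i _ => ?_; ring

/-- Half of Courant–Fischer: if some subspace of dimension `≥ j+1` witnesses the quadratic-form
lower bound `c`, then `c ≤ eigDesc hB j`. -/
lemma le_eigDesc_of_subspace {n : ℕ} {B : Matrix (Fin n) (Fin n) ℝ} (hB : B.IsHermitian)
    (j : Fin n) (c : ℝ) (V : Submodule ℝ (EuclideanSpace ℝ (Fin n)))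
    (hdim : j.val + 1 ≤ Module.finrank ℝ V)
    (hV : ∀ x ∈ V, c * ‖x‖ ^ 2 ≤ ⟪x, Matrix.toEuclideanLin B x⟫) :
    c ≤ eigDesc hB j := by
  classical
  set d : ℝ := eigDesc hB j with hd
  set b := hB.eigenvectorBasis with hbdef
  set t : Finset (Fin n) := Finset.univ.filter fun i => hB.eigenvalues i ≤ d with htdef
  have hcard : n - j.val ≤ t.card := card_filter_le hB.eigenvalues j
  set W : Submodule ℝ (EuclideanSpace ℝ (Fin n)) := Submodule.span ℝ (b '' ↑t) with hWdef
  have hWrank : Module.finrank ℝ W = t.card := finrank_span_onb b t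
  -- the intersection V ⊓ W is nontrivial
  have hfin : Module.finrank ℝ (EuclideanSpace ℝ (Fin n)) = n := finrank_euclideanSpace_fin
  have hsum := Submodule.finrank_sup_add_finrank_inf_eq V W
  have hle : Module.finrank ℝ ↥(V ⊔ W) ≤ n := by
    simpa [hfin] using Submodule.finrank_le (V ⊔ W)
  have hpos : 0 < Module.finrank ℝ ↥(V ⊓ W) := by omega
  have : Nontrivial ↥(V ⊓ W) := Module.finrank_pos_iff.mp hpos
  obtain ⟨y, hy⟩ := exists_ne (0 : ↥(V ⊓ W))
  have hxV : (y : EuclideanSpace ℝ (Fin n)) ∈ V := y.2.1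
  have hxW : (y : EuclideanSpace ℝ (Fin n)) ∈ W := y.2.2
  set x : EuclideanSpace ℝ (Fin n) := (y : EuclideanSpace ℝ (Fin n)) with hxdef
  have hx0 : x ≠ 0 := fun h => hy (Subtype.ext h)
  have hupper : ⟪x, Matrix.toEuclideanLin B x⟫ ≤ d * ‖x‖ ^ 2 := by
    have h1 : ⟪x, Matrix.toEuclideanLin B x⟫
        = ∑ i, hB.eigenvalues i * (b.repr x i) ^ 2 := by
      rw [inner_eq_dot]
      exact dot_mulVec_eq_sum hB x
    rw [h1, norm_sq_eq_sum hB x, Finset.mul_sum]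
    refine Finset.sum_le_sum fun i _ => ?_
    by_cases hi : i ∈ t
    · have : hB.eigenvalues i ≤ d := by simpa [htdef] using hi
      exact mul_le_mul_of_nonneg_right this (sq_nonneg _)
    · rw [repr_eq_zero_of_mem_span b t hxW hi]
      simp
  have hlower := hV x hxV
  have hn : 0 < ‖x‖ ^ 2 := by
    have := norm_pos_iff.mpr hx0
    positivity
  have := hlower.trans hupper
  exact (mul_le_mul_iff_of_pos_right hn).mp this

lemma permMatrix_tp_mul {n : ℕ} (σ : Equiv.Perm (Fin n)) :
    (σ.permMatrix ℝ)ᵀ * σ.permMatrix ℝ = 1 := by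
  rw [← PEquiv.toMatrix_symm, ← PEquiv.toMatrix_trans, ← Equiv.toPEquiv_symm,
    ← Equiv.toPEquiv_trans]
  simp

lemma dot_sq {n k : ℕ} (L : Matrix (Fin n) (Fin k) ℝ) (x : Fin k → ℝ) :
    x ⬝ᵥ (((Lᵀ * L) * (Lᵀ * L)) *ᵥ x) = ((Lᵀ * L) *ᵥ x) ⬝ᵥ ((Lᵀ * L) *ᵥ x) := by
  have h := dot_conj (Lᵀ * L) 1 x
  have hMt : (Lᵀ * L)ᵀ = Lᵀ * L := by rw [Matrix.transpose_mul, Matrix.transpose_transpose]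
  rw [Matrix.mul_one, hMt] at h
  simpa using h

lemma blockR_nonneg {k m : ℕ} (S : Matrix (Fin m) (Fin m) ℝ) (hS : S.PosSemidef)
    (v : Fin (k + m) → ℝ) :
    0 ≤ v ⬝ᵥ ((Matrix.reindex finSumFinEquiv finSumFinEquiv)
        (Matrix.fromBlocks (0 : Matrix (Fin k) (Fin k) ℝ) 0 0 S) *ᵥ v) := by
  rw [Matrix.reindex_apply, Matrix.submatrix_mulVec_equiv]
  simp only [Equiv.symm_symm]
  rw [dotProduct_comp_equiv_symm]
  set u : Fin k ⊕ Fin m → ℝ := v ∘ finSumFinEquiv with hu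
  have h2 : u ⬝ᵥ (Matrix.fromBlocks (0 : Matrix (Fin k) (Fin k) ℝ) 0 0 S *ᵥ u)
      = (u ∘ Sum.inr) ⬝ᵥ (S *ᵥ (u ∘ Sum.inr)) := by
    conv_lhs => rw [← Sum.elim_comp_inl_inr u]
    rw [Matrix.fromBlocks_mulVec, sumElim_dotProduct_sumElim]
    simp
  rw [h2]
  simpa using hS.dotProduct_mulVec_nonneg (u ∘ Sum.inr)

end CholAux


open CholAux in
/-- For a partial Cholesky factorization `Πᵀ A Π = L Lᵀ + [[0,0],[0,S]]` of a
symmetric positive semidefinite `A`, the squared singular values of `L` are dominated by the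
corresponding eigenvalues of `A`: `λ_j(A) ≥ σ_j²(L)` for `1 ≤ j ≤ k`. -/
theorem partial_cholesky_sval_le_eig {k m : ℕ}
    (A : Matrix (Fin (k + m)) (Fin (k + m)) ℝ) (hA : A.PosSemidef)
    (σ : Equiv.Perm (Fin (k + m)))
    (L : Matrix (Fin (k + m)) (Fin k) ℝ)
    (S : Matrix (Fin m) (Fin m) ℝ) (hS : S.PosSemidef)
    (hfact : (σ.permMatrix ℝ)ᵀ * A * σ.permMatrix ℝ =
      L * Lᵀ + (Matrix.reindex finSumFinEquiv finSumFinEquiv) (Matrix.fromBlocks 0 0 0 S)) :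
    ∀ j : Fin k, sval L j ^ 2 ≤ eigDesc hA.isHermitian (Fin.castAdd m j) := by
  intro j
  classical
  have hM : (Lᵀ * L).IsHermitian := by simpa using Matrix.isHermitian_conjTranspose_mul_self L
  have hMpsd : (Lᵀ * L).PosSemidef := by
    have h := Matrix.posSemidef_conjTranspose_mul_self L
    rwa [Matrix.conjTranspose_eq_transpose_of_trivial] at h
  have hc0 : 0 ≤ eigDesc hM j := hMpsd.eigenvalues_nonneg _
  have hAnn : 0 ≤ eigDesc hA.isHermitian (Fin.castAdd m j) := hA.eigenvalues_nonneg _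
  have hsq : sval L j ^ 2 = eigDesc hM j := Real.sq_sqrt hc0
  rw [hsq]
  rcases eq_or_lt_of_le hc0 with h0 | hpos
  · rw [← h0]; exact hAnn
  set c : ℝ := eigDesc hM j with hcdef
  set t : Finset (Fin k) := Finset.univ.filter (fun i => c ≤ hM.eigenvalues i) with htdef
  have hcard : j.val + 1 ≤ t.card := card_filter_ge hM.eigenvalues j
  set V : Submodule ℝ (EuclideanSpace ℝ (Fin k)) :=
    Submodule.span ℝ (hM.eigenvectorBasis '' ↑t) with hVdef
  have hVrank : Module.finrank ℝ V = t.card := finrank_span_onb hM.eigenvectorBasis t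
  have hsupp : ∀ x : EuclideanSpace ℝ (Fin k), x ∈ V → ∀ i, i ∉ t →
      hM.eigenvectorBasis.repr x i = 0 :=
    fun x hx i hi => repr_eq_zero_of_mem_span hM.eigenvectorBasis t hx hi
  have hlow : ∀ x : EuclideanSpace ℝ (Fin k), x ∈ V →
      c * ‖x‖ ^ 2 ≤ (x : Fin k → ℝ) ⬝ᵥ ((Lᵀ * L) *ᵥ (x : Fin k → ℝ)) := by
    intro x hx
    rw [dot_mulVec_eq_sum hM x, norm_sq_eq_sum hM x, Finset.mul_sum]
    refine Finset.sum_le_sum fun i _ => ?_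
    by_cases hi : i ∈ t
    · have hci : c ≤ hM.eigenvalues i := by
        simp only [htdef, Finset.mem_filter] at hi
        exact hi.2
      exact mul_le_mul_of_nonneg_right hci (sq_nonneg _)
    · rw [hsupp x hx i hi]
      simp
  have hmid : ∀ x : EuclideanSpace ℝ (Fin k), x ∈ V →
      c * ((x : Fin k → ℝ) ⬝ᵥ ((Lᵀ * L) *ᵥ (x : Fin k → ℝ)))
        ≤ ((Lᵀ * L) *ᵥ (x : Fin k → ℝ)) ⬝ᵥ ((Lᵀ * L) *ᵥ (x : Fin k → ℝ)) := by
    intro x hx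
    rw [dot_mulVec_eq_sum hM x, mulVec_dot_mulVec_eq_sum hM x, Finset.mul_sum]
    refine Finset.sum_le_sum fun i _ => ?_
    by_cases hi : i ∈ t
    · have hci : c ≤ hM.eigenvalues i := by
        simp only [htdef, Finset.mem_filter] at hi
        exact hi.2
      nlinarith [sq_nonneg (hM.eigenvectorBasis.repr x i),
        mul_nonneg (hc0.trans hci) (sq_nonneg (hM.eigenvectorBasis.repr x i))]
    · rw [hsupp x hx i hi]
      simp
  set f : EuclideanSpace ℝ (Fin k) →ₗ[ℝ] EuclideanSpace ℝ (Fin (k + m)) :=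
    Matrix.toEuclideanLin (σ.permMatrix ℝ * L) with hfdef
  have hfapp : ∀ x : EuclideanSpace ℝ (Fin k),
      (f x : Fin (k + m) → ℝ) = (σ.permMatrix ℝ * L) *ᵥ (x : Fin k → ℝ) := fun _ => rfl
  have hQtQ : (σ.permMatrix ℝ * L)ᵀ * (σ.permMatrix ℝ * L) = Lᵀ * L := by
    rw [Matrix.transpose_mul, Matrix.mul_assoc, ← Matrix.mul_assoc (σ.permMatrix ℝ)ᵀ,
      permMatrix_tp_mul, Matrix.one_mul]
  have hnorm : ∀ x : Fin k → ℝ,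
      ((σ.permMatrix ℝ * L) *ᵥ x) ⬝ᵥ ((σ.permMatrix ℝ * L) *ᵥ x)
        = x ⬝ᵥ ((Lᵀ * L) *ᵥ x) := by
    intro x
    have h := dot_conj (σ.permMatrix ℝ * L) 1 x
    rw [Matrix.mul_one, hQtQ] at h
    simpa using h.symm
  have hQAQ : (σ.permMatrix ℝ * L)ᵀ * A * (σ.permMatrix ℝ * L)
      = (Lᵀ * L) * (Lᵀ * L) + Lᵀ * (((Matrix.reindex finSumFinEquiv finSumFinEquiv)
          (Matrix.fromBlocks (0 : Matrix (Fin k) (Fin k) ℝ) 0 0 S)) * L) := by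
    have h1 : (σ.permMatrix ℝ * L)ᵀ * A * (σ.permMatrix ℝ * L)
        = Lᵀ * (((σ.permMatrix ℝ)ᵀ * A * σ.permMatrix ℝ) * L) := by
      simp only [Matrix.transpose_mul, Matrix.mul_assoc]
    rw [h1, hfact]
    simp only [Matrix.add_mul, Matrix.mul_add, Matrix.mul_assoc]
  have hinj : ∀ x : EuclideanSpace ℝ (Fin k), x ∈ V → f x = 0 → x = 0 := by
    intro x hx h0
    have hz : (σ.permMatrix ℝ * L) *ᵥ (x : Fin k → ℝ) = 0 := by
      rw [← hfapp x]
      exact congrArg WithLp.ofLp h0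
    have h1 : (x : Fin k → ℝ) ⬝ᵥ ((Lᵀ * L) *ᵥ (x : Fin k → ℝ)) = 0 := by
      rw [← hnorm, hz]
      simp
    have h2 := hlow x hx
    rw [h1] at h2
    have h4 : ‖x‖ = 0 := by
      by_contra hne
      have hxpos : 0 < ‖x‖ := lt_of_le_of_ne (norm_nonneg x) (Ne.symm hne)
      have hc2 : 0 < c * ‖x‖ ^ 2 := mul_pos hpos (by positivity)
      linarith
    exact norm_eq_zero.mp h4
  have hker : LinearMap.ker (f.comp V.subtype) = ⊥ :=
    LinearMap.ker_eq_bot'.mpr fun y hy => Subtype.ext (hinj y.1 y.2 (by simpa using hy))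
  have hginj : Function.Injective (f.comp V.subtype) := LinearMap.ker_eq_bot.mp hker
  have hWrank : Module.finrank ℝ (Submodule.map f V) = Module.finrank ℝ V := by
    rw [← LinearMap.finrank_range_of_inj hginj, LinearMap.range_comp, Submodule.range_subtype]
  refine le_eigDesc_of_subspace hA.isHermitian (Fin.castAdd m j) c (Submodule.map f V) ?_ ?_
  · rw [hWrank, hVrank]
    simpa using hcard
  · intro y hy
    obtain ⟨x, hxV, rfl⟩ := Submodule.mem_map.mp hy
    have hnormy : ‖f x‖ ^ 2 = (x : Fin k → ℝ) ⬝ᵥ ((Lᵀ * L) *ᵥ (x : Fin k → ℝ)) := by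
      rw [← real_inner_self_eq_norm_sq, inner_eq_dot, hfapp x, hnorm]
    have hq : (inner ℝ (f x) (Matrix.toEuclideanLin A (f x)) : ℝ)
        = ((Lᵀ * L) *ᵥ (x : Fin k → ℝ)) ⬝ᵥ ((Lᵀ * L) *ᵥ (x : Fin k → ℝ))
          + (L *ᵥ (x : Fin k → ℝ)) ⬝ᵥ
            (((Matrix.reindex finSumFinEquiv finSumFinEquiv) (Matrix.fromBlocks (0 : Matrix (Fin k) (Fin k) ℝ) 0 0 S))
              *ᵥ (L *ᵥ (x : Fin k → ℝ))) := by
      rw [inner_eq_dot]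
      have h1 : (Matrix.toEuclideanLin A (f x) : Fin (k + m) → ℝ)
          = A *ᵥ (f x : Fin (k + m) → ℝ) := rfl
      rw [h1, hfapp x, ← dot_conj, hQAQ, Matrix.add_mulVec, dotProduct_add, dot_sq]
      congr 1
      have h2 := dot_conj L ((Matrix.reindex finSumFinEquiv finSumFinEquiv)
        (Matrix.fromBlocks (0 : Matrix (Fin k) (Fin k) ℝ) 0 0 S)) (x : Fin k → ℝ)
      rw [← h2, Matrix.mul_assoc]
    rw [hq, hnormy]
    have hm2 := hmid x hxV
    have hRn := blockR_nonneg S hS (L *ᵥ (x : Fin k → ℝ))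
    linarith
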